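/- Let s be a finite index set, let k_i be real weights with k_i ≥ 0 for all i and ∑_{i∈s} k_i = 1, and let z_i be real numbers with a ≤ z_i ≤ b for all i ∈ s. Then 0 ≤ ∑_{i∈s} k_i z_i² − (∑_{i∈s} k_i z_i)² ≤ (b−a)²/4. -/

import Mathlib

theorem stmt_12 {ι : Type*} (s : Finset ι) (k z : ι → ℝ) (a b : ℝ)
    (hk0 : ∀ i ∈ s, 0 ≤ k i) (hk : ∑ i ∈ s, k i = 1)
    (hz : ∀ i ∈ s, z i ∈ Set.Icc a b) :
    0 ≤ (∑ i ∈ s, k i * (z i) ^ 2) - (∑ i ∈ s, k i * z i) ^ 2 ∧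
    (∑ i ∈ s, k i * (z i) ^ 2) - (∑ i ∈ s, k i * z i) ^ 2 ≤ (b - a) ^ 2 / 4 := by
  set m := ∑ i ∈ s, k i * z i with hm
  have key : (∑ i ∈ s, k i * (z i) ^ 2) - m ^ 2
      = ∑ i ∈ s, k i * (z i - m) ^ 2 := by
    have h2 : ∑ i ∈ s, k i * (z i - m) ^ 2
        = (∑ i ∈ s, k i * (z i) ^ 2) - 2 * m * (∑ i ∈ s, k i * z i)
          + m ^ 2 * (∑ i ∈ s, k i) := by
      have h5 : ∑ i ∈ s, k i * (z i - m) ^ 2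
          = ∑ i ∈ s, (k i * (z i) ^ 2 - 2 * m * (k i * z i) + m ^ 2 * k i) := by
        apply Finset.sum_congr rfl
        intro i _; ring
      rw [h5, Finset.sum_add_distrib, Finset.sum_sub_distrib,
        ← Finset.mul_sum, ← Finset.mul_sum]
    rw [h2, hk, ← hm]; ring
  constructor
  · rw [key]
    apply Finset.sum_nonneg
    intro i hi
    exact mul_nonneg (hk0 i hi) (sq_nonneg _)
  · have h1 : ∑ i ∈ s, k i * (z i) ^ 2 ≤ (a + b) * m - a * b := by
      have h3 : ∑ i ∈ s, k i * ((a + b) * z i - a * b)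
          = (a + b) * m - a * b := by
        have h4 : ∑ i ∈ s, k i * ((a + b) * z i - a * b)
            = (a + b) * (∑ i ∈ s, k i * z i) - a * b * (∑ i ∈ s, k i) := by
          have h6 : ∑ i ∈ s, k i * ((a + b) * z i - a * b)
              = ∑ i ∈ s, ((a + b) * (k i * z i) - a * b * k i) := by
            apply Finset.sum_congr rfl
            intro i _; ring
          rw [h6, Finset.sum_sub_distrib, ← Finset.mul_sum, ← Finset.mul_sum]
        rw [h4, hk, ← hm]; ring
      rw [← h3]
      apply Finset.sum_le_sum
      intro i hi
      obtain ⟨ha, hb⟩ := hz i hi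
      have hnn : 0 ≤ (b - z i) * (z i - a) := mul_nonneg (by linarith) (by linarith)
      have hz2 : (z i) ^ 2 ≤ (a + b) * z i - a * b := by nlinarith
      exact mul_le_mul_of_nonneg_left hz2 (hk0 i hi)
    nlinarith [sq_nonneg (m - (a + b) / 2)]
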